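/- Let a : ℕ → ℝ be a sequence with a(n) > 0 for all n ≥ 1, a(1) = a(2) = a(3) = 1, a(5) ≥ 3, and such that for every integer n ≥ 4 both a(n−1) + a(n−3) ≤ a(n) ≤ 2·a(n−1) and 2·a(n−1) − Σ_{j=2}^{n+1−⌈√(n−1)⌉} a(j) ≤ a(n). Let C = lim_{n→∞} a(n)/2^n (which exists and is positive). Then for every integer m ≥ 5, with z₀ = min(3/8, 3·(4/5)^(⌈√(m−1)⌉ − 2)), ν = (75/16)/(1 − z₀), δ = ln(5/4), and F(x) = −(2/δ²)·(1 + δ·√x)·(4/5)^(√x), one has exp(ν·F(m−1)) · a(m)/2^m ≤ C ≤ a(m)/2^m. -/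

import Mathlib

open Filter

/-- `Gf` is the primitive of `x ↦ (4/5)^√x`, written with `exp`. -/
noncomputable def Gf (x : ℝ) : ℝ :=
  -(2 / (Real.log (5/4)) ^ 2) * ((1 + Real.log (5/4) * Real.sqrt x) *
    Real.exp (-(Real.log (5/4) * Real.sqrt x)))

lemma dpos : 0 < Real.log (5/4) := Real.log_pos (by norm_num)

lemma rpow45 (y : ℝ) : (4/5 : ℝ) ^ y = Real.exp (-(Real.log (5/4) * y)) := by
  rw [Real.rpow_def_of_pos (by norm_num : (0:ℝ) < 4/5)]
  congr 1
  rw [show (4/5:ℝ) = (5/4)⁻¹ by norm_num, Real.log_inv]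
  ring

lemma Gderiv {x : ℝ} (hx : 0 < x) :
    HasDerivAt Gf (Real.exp (-(Real.log (5/4) * Real.sqrt x))) x := by
  have hδ0 : 0 < Real.log (5/4) := dpos
  have hs0 : 0 < Real.sqrt x := Real.sqrt_pos.2 hx
  have hs : HasDerivAt Real.sqrt (1/(2*Real.sqrt x)) x := Real.hasDerivAt_sqrt hx.ne'
  have h1 : HasDerivAt (fun t => -(Real.log (5/4) * Real.sqrt t))
      (-(Real.log (5/4) * (1/(2*Real.sqrt x)))) x := (hs.const_mul _).neg
  have h2 := h1.exp
  have h3 : HasDerivAt (fun t => 1 + Real.log (5/4) * Real.sqrt t)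
      (Real.log (5/4) * (1/(2*Real.sqrt x))) x := (hs.const_mul _).const_add 1
  have h4 := (h3.mul h2).const_mul (-(2 / (Real.log (5/4)) ^ 2))
  convert h4 using 1
  · rfl
  · rfl
  · funext y; simp only [Gf, Pi.mul_apply]
  field_simp
  ring

lemma Gstep {x y : ℝ} (hx : 1 ≤ x) (hxy : x ≤ y) :
    (y - x) * Real.exp (-(Real.log (5/4) * Real.sqrt y)) ≤ Gf y - Gf x := by
  rcases eq_or_lt_of_le hxy with rfl | h
  · simp
  · obtain ⟨c, hc, hceq⟩ := exists_hasDerivAt_eq_slope Gf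
      (fun t => Real.exp (-(Real.log (5/4) * Real.sqrt t))) h
      (fun t ht => (Gderiv (by have := ht.1; linarith : (0:ℝ) < t)).continuousAt.continuousWithinAt)
      (fun t ht => Gderiv (by have := ht.1; linarith : (0:ℝ) < t))
    have h1 : Real.exp (-(Real.log (5/4) * Real.sqrt y))
        ≤ Real.exp (-(Real.log (5/4) * Real.sqrt c)) := by
      apply Real.exp_le_exp.2
      have hsc : Real.sqrt c ≤ Real.sqrt y := Real.sqrt_le_sqrt hc.2.le
      nlinarith [dpos]
    calc (y - x) * Real.exp (-(Real.log (5/4) * Real.sqrt y))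
        ≤ (y - x) * Real.exp (-(Real.log (5/4) * Real.sqrt c)) :=
          mul_le_mul_of_nonneg_left h1 (by linarith)
      _ = Gf y - Gf x := by
          rw [hceq, mul_comm, div_mul_cancel₀ _ (by linarith : y - x ≠ 0)]

lemma Gnonpos (x : ℝ) : Gf x ≤ 0 := by
  have hδ0 : 0 < Real.log (5/4) := dpos
  have h1 : (0:ℝ) ≤ 1 + Real.log (5/4) * Real.sqrt x := by
    have := Real.sqrt_nonneg x
    nlinarith
  have h2 := Real.exp_pos (-(Real.log (5/4) * Real.sqrt x))
  apply mul_nonpos_of_nonpos_of_nonneg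
  · have : (0:ℝ) < 2 / (Real.log (5/4))^2 := by positivity
    linarith
  · positivity

lemma expbound {z w : ℝ} (h0 : 0 ≤ z) (h1 : z ≤ w) (h2 : w < 1) :
    Real.exp (-(z/(1-w))) ≤ 1 - z := by
  have hw : 0 < 1 - w := by linarith
  have ht : 0 ≤ z/(1-w) := div_nonneg h0 hw.le
  have h3 : 1 + z/(1-w) ≤ Real.exp (z/(1-w)) := by
    have := Real.add_one_le_exp (z/(1-w)); linarith
  have key : 1 ≤ (1 - z) * Real.exp (z/(1-w)) := by
    have expand : (1 + z/(1-w)) * (1-z) - 1 = z*(w-z)/(1-w) := by field_simp; ring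
    have hnn : 0 ≤ z*(w-z)/(1-w) := div_nonneg (mul_nonneg h0 (by linarith)) hw.le
    nlinarith [Real.exp_pos (z/(1-w))]
  have hE := Real.exp_pos (z/(1-w))
  calc Real.exp (-(z/(1-w))) = 1 / Real.exp (z/(1-w)) := by
        rw [Real.exp_neg, one_div]
    _ ≤ 1 - z := by rw [div_le_iff₀ hE]; linarith

lemma geo : ∀ K : ℕ, ∑ j ∈ Finset.Icc 2 K, (4/5:ℝ)^(K-j) ≤ 5 := by
  intro K
  induction K with
  | zero => simp
  | succ K ih =>
    rcases Nat.lt_or_ge K 1 with h|h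
    · interval_cases K
      rw [show Finset.Icc 2 1 = ∅ from Finset.Icc_eq_empty (by omega)]
      simp
    · have hins : Finset.Icc 2 (K+1) = insert (K+1) (Finset.Icc 2 K) := by
        ext x; simp [Finset.mem_Icc, Finset.mem_insert]; omega
      rw [hins, Finset.sum_insert (by simp)]
      have hc : ∑ j ∈ Finset.Icc 2 K, (4/5:ℝ)^(K+1-j)
          = ∑ j ∈ Finset.Icc 2 K, (4/5)*(4/5:ℝ)^(K-j) := by
        apply Finset.sum_congr rfl
        intro j hj
        have hj' := Finset.mem_Icc.1 hj
        rw [← pow_succ']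
        congr 1
        omega
      rw [hc, ← Finset.mul_sum]
      simp only [Nat.sub_self, pow_zero]
      linarith

theorem stmt_12 (a : ℕ → ℝ)
    (hpos : ∀ n, 1 ≤ n → 0 < a n)
    (h1 : a 1 = 1) (h2 : a 2 = 1) (h3 : a 3 = 1) (h5 : 3 ≤ a 5)
    (hlow : ∀ n, 4 ≤ n → a (n - 1) + a (n - 3) ≤ a n)
    (hup : ∀ n, 4 ≤ n → a n ≤ 2 * a (n - 1))
    (hlow2 : ∀ n, 4 ≤ n →
      2 * a (n - 1) - ∑ j ∈ Finset.Icc 2 (n + 1 - ⌈Real.sqrt ((n : ℝ) - 1)⌉₊), a j ≤ a n)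
    (C : ℝ) (hC : Tendsto (fun n => a n / 2 ^ n) atTop (nhds C)) :
    ∀ m : ℕ, 5 ≤ m →
      ∀ z₀ ν δ : ℝ, ∀ F : ℝ → ℝ,
        z₀ = min (3 / 8) (3 * (4 / 5) ^ (⌈Real.sqrt ((m : ℝ) - 1)⌉₊ - 2)) →
        ν = (75 / 16) / (1 - z₀) →
        δ = Real.log (5 / 4) →
        (∀ x : ℝ, F x = -(2 / δ ^ 2) * (1 + δ * Real.sqrt x) * (4 / 5 : ℝ) ^ Real.sqrt x) →
        Real.exp (ν * F ((m : ℝ) - 1)) * a m / 2 ^ m ≤ C ∧ C ≤ a m / 2 ^ m := by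
  intro m hm z₀ ν δ F hz₀ hν hδ hF
  -- basic sequence facts
  have ha4 : a 4 = 2 := by
    have hl := hlow 4 (by norm_num)
    have hu := hup 4 (by norm_num)
    norm_num [h1, h3] at hl hu
    linarith
  have hup' : ∀ n, 3 ≤ n → a (n+1) ≤ 2 * a n := by
    intro n hn
    have := hup (n+1) (by omega)
    simpa using this
  have hratio : ∀ n, 4 ≤ n → (5/4) * a n ≤ a (n+1) := by
    intro n hn
    rcases eq_or_lt_of_le hn with h|h
    · subst h
      norm_num [ha4]
      linarith
    · obtain ⟨k, rfl⟩ : ∃ k, n = k + 5 := ⟨n - 5, by omega⟩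
      have l1 := hlow (k+6) (by omega)
      have e1 : k+6-1 = k+5 := by omega
      have e2 : k+6-3 = k+3 := by omega
      rw [e1, e2] at l1
      have u1 := hup' (k+4) (by omega)
      have u2 := hup' (k+3) (by omega)
      linarith
  have hgrow : ∀ n, 4 ≤ n → ∀ d, a n ≤ (4/5:ℝ)^d * a (n+d) := by
    intro n hn d
    induction d with
    | zero => simp
    | succ d ih =>
      have hr := hratio (n+d) (by omega)
      have hnn : (0:ℝ) ≤ (4/5:ℝ)^d := by positivity
      calc a n ≤ (4/5:ℝ)^d * a (n+d) := ih
        _ ≤ (4/5:ℝ)^d * ((4/5) * a (n+d+1)) := by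
            apply mul_le_mul_of_nonneg_left _ hnn
            linarith
        _ = (4/5:ℝ)^(d+1) * a (n+(d+1)) := by rw [pow_succ]; ring
  have hjle : ∀ n, 4 ≤ n → ∀ j, 2 ≤ j → j ≤ n → a j ≤ (4/5:ℝ)^(n-j) * a n := by
    intro n hn j hj2 hjn
    rcases Nat.lt_or_ge j 4 with hj4|hj4
    · have h4 := hgrow 4 (le_refl 4) (n-4)
      rw [show 4 + (n-4) = n from by omega, ha4] at h4
      interval_cases j
      · rw [h2, show n - 2 = (n-4) + 2 from by omega, pow_add]
        nlinarith [h4]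
      · rw [h3, show n - 3 = (n-4) + 1 from by omega, pow_add]
        nlinarith [h4]
    · obtain ⟨d, rfl⟩ : ∃ d, n = j + d := ⟨n - j, by omega⟩
      have := hgrow j hj4 d
      rwa [show j + d - j = d from by omega]
  -- the one-step inequality
  have hstep : ∀ n : ℕ, 5 ≤ n →
      (1 - min (3/8) (3*(4/5:ℝ)^(⌈Real.sqrt (n:ℝ)⌉₊ - 2))) * (a n / 2^n)
        ≤ a (n+1) / 2^(n+1) := by
    intro n hn
    set k := ⌈Real.sqrt (n:ℝ)⌉₊ with hk
    have hk2 : 2 ≤ k := by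
      have h1' : (1:ℝ) < Real.sqrt (n:ℝ) := by
        rw [show (1:ℝ) = Real.sqrt 1 by simp]
        apply Real.sqrt_lt_sqrt (by norm_num)
        exact_mod_cast (by omega : 1 < n)
      have h2' : 1 < k := Nat.lt_ceil.mpr (by exact_mod_cast h1')
      omega
    have hkn : k ≤ n := by
      rw [hk]
      apply Nat.ceil_le.2
      have hs : Real.sqrt (n:ℝ) ≤ (n:ℝ) := by
        rw [Real.sqrt_le_left (by positivity)]
        have h1n : (1:ℝ) ≤ (n:ℝ) := by exact_mod_cast (by omega : 1 ≤ n)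
        nlinarith
      exact_mod_cast hs
    have hl2 := hlow2 (n+1) (by omega)
    rw [show (n+1:ℕ) - 1 = n from by omega] at hl2
    rw [show ((n+1:ℕ):ℝ) - 1 = (n:ℝ) from by push_cast; ring] at hl2
    set K := n+1+1-k with hK
    have hK2 : 2 ≤ K := by omega
    have hKn : K ≤ n := by omega
    have hpn : (0:ℝ) < a n := hpos n (by omega)
    have hSsum : ∑ j ∈ Finset.Icc 2 K, a j ≤ 5 * ((4/5:ℝ)^(k-2) * a n) := by
      have step1 : ∑ j ∈ Finset.Icc 2 K, a j
          ≤ ∑ j ∈ Finset.Icc 2 K, (4/5:ℝ)^(K-j) * ((4/5:ℝ)^(n-K) * a n) := by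
        apply Finset.sum_le_sum
        intro j hj
        have hj' := Finset.mem_Icc.1 hj
        calc a j ≤ (4/5:ℝ)^(n-j) * a n := hjle n (by omega) j hj'.1 (le_trans hj'.2 hKn)
          _ = (4/5:ℝ)^(K-j) * ((4/5:ℝ)^(n-K) * a n) := by
              rw [← mul_assoc, ← pow_add]
              congr 2
              omega
      rw [← Finset.sum_mul] at step1
      have step2 : (∑ j ∈ Finset.Icc 2 K, (4/5:ℝ)^(K-j)) * ((4/5:ℝ)^(n-K) * a n)
          ≤ 5 * ((4/5:ℝ)^(n-K) * a n) := by
        apply mul_le_mul_of_nonneg_right (geo K)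
        positivity
      rw [show n - K = k - 2 from by omega] at step1 step2
      linarith
    have h2n : (0:ℝ) < (2:ℝ)^n := by positivity
    rcases le_total ((3:ℝ)/8) (3*(4/5:ℝ)^(k-2)) with hmin|hmin
    · rw [min_eq_left hmin]
      have hr := hratio n (by omega)
      rw [pow_succ]
      calc (1 - 3/8) * (a n / 2^n) = (5/4 * a n) / (2^n * 2) := by ring
        _ ≤ a (n+1) / (2^n * 2) := by gcongr
    · rw [min_eq_right hmin]
      set c := (4/5:ℝ)^(k-2) with hc
      have hc0 : (0:ℝ) ≤ c := by positivity
      have key : 2 * a n - 5 * (c * a n) ≤ a (n+1) := by linarith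
      rw [pow_succ]
      calc (1 - 3*c) * (a n / 2^n) ≤ (1 - (5/2)*c) * (a n / 2^n) := by
            apply mul_le_mul_of_nonneg_right _ (by positivity)
            linarith
        _ = (2*a n - 5*(c*a n)) / (2^n * 2) := by ring
        _ ≤ a (n+1) / (2^n * 2) := by gcongr
  -- rewrite F as Gf
  have hF' : ∀ x, F x = Gf x := by
    intro x
    rw [hF x, hδ, rpow45]
    simp only [Gf]
    ring
  have hz₀8 : z₀ ≤ 3/8 := by rw [hz₀]; exact min_le_left _ _
  have hz₀0 : 0 ≤ z₀ := by
    rw [hz₀]; exact le_min (by norm_num) (by positivity)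
  have hz₀1 : z₀ < 1 := lt_of_le_of_lt hz₀8 (by norm_num)
  have hν0 : 0 < ν := by
    rw [hν]; apply div_pos (by norm_num); linarith
  have hbm : (0:ℝ) ≤ a m / 2^m := div_nonneg (hpos m (by omega)).le (by positivity)
  constructor
  · -- lower bound
    have hzle : ∀ N : ℕ, m ≤ N →
        min (3/8) (3*(4/5:ℝ)^(⌈Real.sqrt (N:ℝ)⌉₊ - 2)) ≤ z₀ := by
      intro N hN
      rw [hz₀]
      apply min_le_min (le_refl _)
      apply mul_le_mul_of_nonneg_left _ (by norm_num)
      apply pow_le_pow_of_le_one (by norm_num) (by norm_num)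
      have hceil : ⌈Real.sqrt ((m:ℝ)-1)⌉₊ ≤ ⌈Real.sqrt (N:ℝ)⌉₊ := by
        apply Nat.ceil_le_ceil
        apply Real.sqrt_le_sqrt
        have : (m:ℝ) ≤ N := by exact_mod_cast hN
        linarith
      omega
    have hzexp : ∀ N : ℕ, 5 ≤ N → min (3/8) (3*(4/5:ℝ)^(⌈Real.sqrt (N:ℝ)⌉₊ - 2))
        ≤ (75/16) * Real.exp (-(Real.log (5/4) * Real.sqrt (N:ℝ))) := by
      intro N hN
      set k := ⌈Real.sqrt (N:ℝ)⌉₊ with hkdef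
      have hk2 : 2 ≤ k := by
        have h1' : (1:ℝ) < Real.sqrt (N:ℝ) := by
          rw [show (1:ℝ) = Real.sqrt 1 by simp]
          apply Real.sqrt_lt_sqrt (by norm_num)
          exact_mod_cast (by omega : 1 < N)
        have h2' : 1 < k := Nat.lt_ceil.mpr (by exact_mod_cast h1')
        omega
      calc min (3/8) (3*(4/5:ℝ)^(k - 2)) ≤ 3*(4/5:ℝ)^(k-2) := min_le_right _ _
        _ ≤ 3 * (4/5:ℝ) ^ ((Real.sqrt (N:ℝ)) - 2 : ℝ) := by
            apply mul_le_mul_of_nonneg_left _ (by norm_num)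
            rw [← Real.rpow_natCast (4/5:ℝ) (k-2)]
            apply Real.rpow_le_rpow_of_exponent_ge (by norm_num) (by norm_num)
            rw [Nat.cast_sub hk2]
            have h1 : Real.sqrt (N:ℝ) ≤ (k:ℝ) := Nat.le_ceil _
            push_cast
            linarith
        _ = (75/16) * Real.exp (-(Real.log (5/4) * Real.sqrt (N:ℝ))) := by
            rw [Real.rpow_sub (by norm_num : (0:ℝ) < 4/5), rpow45]
            rw [show ((2:ℝ) = ((2:ℕ):ℝ)) from by norm_num, Real.rpow_natCast]
            norm_num
            ring
    -- the main induction
    have main : ∀ N, m ≤ N →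
        a m / 2^m * Real.exp (ν * (Gf ((m:ℝ)-1) - Gf ((N:ℝ)-1))) ≤ a N / 2^N := by
      intro N hN
      induction N, hN using Nat.le_induction with
      | base => simp
      | succ N hmN ih =>
        have hN5 : 5 ≤ N := le_trans hm hmN
        rw [show ((N+1:ℕ):ℝ) - 1 = (N:ℝ) from by push_cast; ring]
        have hstepN := hstep N hN5
        set z := min (3/8) (3*(4/5:ℝ)^(⌈Real.sqrt (N:ℝ)⌉₊ - 2)) with hzdef
        have hz0' : (0:ℝ) ≤ z := le_min (by norm_num) (by positivity)
        have hzz₀ : z ≤ z₀ := hzle N hmN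
        have hG : Real.exp (-(Real.log (5/4) * Real.sqrt (N:ℝ)))
            ≤ Gf (N:ℝ) - Gf ((N:ℝ)-1) := by
          have hN5' : (5:ℝ) ≤ (N:ℝ) := by exact_mod_cast hN5
          have := Gstep (x := (N:ℝ)-1) (y := (N:ℝ)) (by linarith) (by linarith)
          rw [show (N:ℝ) - ((N:ℝ)-1) = 1 from by ring, one_mul] at this
          exact this
        have hzν : z / (1-z₀) ≤ ν * (Gf (N:ℝ) - Gf ((N:ℝ)-1)) := by
          have h1z₀ : (0:ℝ) < 1 - z₀ := by linarith
      
          have h2' : z ≤ (75/16) * (Gf (N:ℝ) - Gf ((N:ℝ)-1)) :=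
            le_trans (hzexp N hN5) (mul_le_mul_of_nonneg_left hG (by norm_num))
          have h3' := mul_le_mul_of_nonneg_right h2' (inv_pos.2 h1z₀).le
          rw [hν]
          calc z / (1-z₀) = z * (1-z₀)⁻¹ := by rw [div_eq_mul_inv]
            _ ≤ (75/16) * (Gf (N:ℝ) - Gf ((N:ℝ)-1)) * (1-z₀)⁻¹ := h3'
            _ = (75/16)/(1-z₀) * (Gf (N:ℝ) - Gf ((N:ℝ)-1)) := by
                rw [div_eq_mul_inv]; ring
        have hzstep : Real.exp (-(ν * (Gf (N:ℝ) - Gf ((N:ℝ)-1)))) ≤ 1 - z := by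
          have hb1 := expbound hz0' hzz₀ hz₀1
          have hb2 : Real.exp (-(ν * (Gf (N:ℝ) - Gf ((N:ℝ)-1))))
              ≤ Real.exp (-(z/(1-z₀))) := Real.exp_le_exp.2 (by linarith)
          linarith
        calc a m / 2^m * Real.exp (ν * (Gf ((m:ℝ)-1) - Gf (N:ℝ)))
            = (a m / 2^m * Real.exp (ν * (Gf ((m:ℝ)-1) - Gf ((N:ℝ)-1))))
              * Real.exp (-(ν * (Gf (N:ℝ) - Gf ((N:ℝ)-1)))) := by
              rw [mul_assoc, ← Real.exp_add]
              congr 2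
              ring
          _ ≤ (a N / 2^N) * (1 - z) :=
              mul_le_mul ih hzstep (Real.exp_pos _).le
                (div_nonneg (hpos N (by omega)).le (by positivity))
          _ = (1 - z) * (a N / 2^N) := by ring
          _ ≤ a (N+1) / 2^(N+1) := hstepN
    have final : ∀ N, m ≤ N → a m / 2^m * Real.exp (ν * Gf ((m:ℝ)-1)) ≤ a N / 2^N := by
      intro N hN
      refine le_trans ?_ (main N hN)
      apply mul_le_mul_of_nonneg_left _ hbm
      apply Real.exp_le_exp.2
      have hGN := Gnonpos ((N:ℝ)-1)
      nlinarith
    have hCl : a m / 2^m * Real.exp (ν * Gf ((m:ℝ)-1)) ≤ C :=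
      ge_of_tendsto hC (eventually_atTop.2 ⟨m, final⟩)
    rw [hF' ((m:ℝ)-1)]
    calc Real.exp (ν * Gf ((m:ℝ)-1)) * a m / 2^m
        = a m / 2^m * Real.exp (ν * Gf ((m:ℝ)-1)) := by ring
      _ ≤ C := hCl
  · -- upper bound
    have mono : ∀ N, m ≤ N → a N / 2^N ≤ a m / 2^m := by
      intro N hN
      induction N, hN using Nat.le_induction with
      | base => exact le_refl _
      | succ N hmN ih =>
        have hu := hup' N (by omega)
        refine le_trans ?_ ih
        rw [pow_succ]
        calc a (N+1) / (2^N * 2) ≤ (2 * a N) / (2^N * 2) := by gcongr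
          _ = a N / 2^N := by ring
    exact le_of_tendsto hC (eventually_atTop.2 ⟨m, mono⟩)
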